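/- In a finite economy with agents N = {1,…,n}, Banach lattice commodity space B, and public projects 𝒴, suppose (x₁,…,xₙ, y) is a cost share equilibrium with price system π and cost distribution ρ. Fix z ∈ 𝒴 and a feasible allocation (γ₁^z,…,γₙ^z, z) satisfying π(z)·γᵢ^z + ρ(i,z)π(z)·c(z) = π(z)·eᵢ for all i. Then for every α = (α₁,…,αₙ) ∈ [0,1]ⁿ, the allocation (x₁,…,xₙ, y) is not z-dominated in the perturbed economy whose endowments are e(z,α)ᵢ = αᵢeᵢ + (1−αᵢ)(γᵢ^z + ρ(i,z)c(z)): there is no (ξ₁,…,ξₙ) ∈ B₊ⁿ with ∑ᵢξᵢ + c(z) = ∑ᵢ e(z,α)ᵢ and uᵢ(ξᵢ, z) > uᵢ(xᵢ, y) for all i ∈ N. -/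

import Mathlib

/-- A cost share equilibrium allocation `(x₁,…,xₙ,y)` is not
`z`-dominated in any perturbed economy whose endowments are
`e(z,α)ᵢ = αᵢeᵢ + (1−αᵢ)(γᵢ^z + ρ(i,z)c(z))`, where `(γ₁^z,…,γₙ^z,z)` is a feasible
allocation exhausting each agent's budget with equality. -/
theorem stmt_18 {B : Type*} [NormedAddCommGroup B] [Lattice B] [HasSolidNorm B]
    [IsOrderedAddMonoid B] [NormedSpace ℝ B]
    {Y : Type*} (n : ℕ)
    (u : Fin n → B → Y → ℝ) (e : Fin n → B) (he : ∀ i, 0 ≤ e i)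
    (c : Y → B) (hc : ∀ z, 0 ≤ c z)
    (π : Y → B →L[ℝ] ℝ) (ρ : Fin n → Y → ℝ)
    (hρ : ∀ i z, 0 ≤ ρ i z) (hρsum : ∀ z, ∑ i, ρ i z = 1)
    (x : Fin n → B) (hx : ∀ i, 0 ≤ x i) (y : Y)
    (hfeas : ∑ i, x i + c y = ∑ i, e i)
    -- cost share equilibrium: budget feasibility and optimality
    (hbudget : ∀ i, π y (x i) + ρ i y * π y (c y) ≤ π y (e i))
    (hopt : ∀ i, ∀ (ζ : B) (w : Y), 0 ≤ ζ →
      π w ζ + ρ i w * π w (c w) ≤ π w (e i) → u i ζ w ≤ u i (x i) y)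
    -- (γ^z, z) is feasible and exhausts each agent's budget with equality
    (z : Y) (γ : Fin n → B) (hγpos : ∀ i, 0 ≤ γ i)
    (hγfeas : ∑ i, γ i + c z = ∑ i, e i)
    (hγbud : ∀ i, π z (γ i) + ρ i z * π z (c z) = π z (e i)) :
    ∀ α : Fin n → ℝ, (∀ i, α i ∈ Set.Icc (0:ℝ) 1) →
      ¬ ∃ ξ : Fin n → B, (∀ i, 0 ≤ ξ i) ∧
        (∑ i, ξ i + c z
          = ∑ i, (α i • e i + (1 - α i) • (γ i + ρ i z • c z))) ∧
        (∀ i, u i (x i) y < u i (ξ i) z) := by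
  intro α hα
  rintro ⟨ξ, hξpos, hξfeas, hξdom⟩
  rcases Nat.eq_zero_or_pos n with hn | hn
  · subst hn; simpa using hρsum z
  have hne : Nonempty (Fin n) := ⟨⟨0, hn⟩⟩
  have hstrict : ∀ i : Fin n, π z (e i) < π z (ξ i) + ρ i z * π z (c z) := by
    intro i
    by_contra h
    push_neg at h
    exact absurd (hξdom i) (not_lt.mpr (hopt i (ξ i) z (hξpos i) h))
  have hval : π z (∑ i, ξ i + c z) = ∑ i, π z (e i) := by
    rw [hξfeas, map_sum]
    refine Finset.sum_congr rfl fun i _ => ?_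
    simp only [map_add, map_smul, smul_eq_mul]
    rw [hγbud i]; ring
  have h1 : ∑ i, π z (e i) < ∑ i, (π z (ξ i) + ρ i z * π z (c z)) :=
    Finset.sum_lt_sum_of_nonempty Finset.univ_nonempty (fun i _ => hstrict i)
  have h2 : ∑ i, (π z (ξ i) + ρ i z * π z (c z)) = π z (∑ i, ξ i + c z) := by
    rw [Finset.sum_add_distrib, ← Finset.sum_mul, hρsum z, one_mul, map_add, map_sum]
  rw [h2, hval] at h1
  exact lt_irrefl _ h1
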